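/- Let G be a finite group with subgroups A, B, M satisfying conditions (1)–(4) with M normal in G, and suppose n is even and all involutions of B are elations of the associated plane whose fixed points all lie on the line at infinity. Then |G| = n³ is a power of 2. -/

import Mathlib

open scoped Pointwise

set_option linter.unusedSectionVars false

open scoped Pointwise

namespace S19

variable {G : Type*} [Group G]

/-- Same point (right coset of `A`). -/
def SP (A : Subgroup G) (x y : G) : Prop := ∃ a ∈ A, y = x * a

/-- Lines: `none` = vertical line `y·M·A`; `some c` = line `y·(cBc⁻¹)·A`. -/
def LS (A B M : Subgroup G) : Option A → G → Set G
  | none => fun y => {g | ∃ m ∈ M, ∃ a ∈ A, g = y * (m * a)}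
  | some c => fun y => {g | ∃ b ∈ B, ∃ a ∈ A, g = y * ((c : G) * b * (c : G)⁻¹ * a)}

/-- Bundle of the basic structural facts derived from the hypotheses. -/
structure Core (A B M AM BM : Subgroup G) (n : ℕ) : Prop where
  normM : ∀ (g x : G), x ∈ M → g * x * g⁻¹ ∈ M
  eAB : ∀ x ∈ A, x ∈ B → x = 1
  eABM : ∀ x ∈ A, x ∈ BM → x = 1
  eBAM : ∀ x ∈ B, x ∈ AM → x = 1
  mBM : ∀ x ∈ M, x ∈ BM
  bBM : ∀ x ∈ B, x ∈ BM
  mAM : ∀ x ∈ M, x ∈ AM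
  l0 : ∀ α ∈ A, ∀ b ∈ B, ∀ β ∈ A, ∀ b' ∈ B, α * b * β = b' →
        (α = 1 ∧ β = 1 ∧ b = b') ∨ (b = 1 ∧ b' = 1 ∧ α * β = 1)
  cover : ∀ g : G, (∃ m ∈ M, ∃ a ∈ A, g = m * a) ∨
          (∃ c ∈ A, ∃ b ∈ B, ∃ a ∈ A, g = c * b * c⁻¹ * a)
  exB : ∃ b ∈ B, b ≠ (1 : G)
  cardn : 1 < n
  cardA : Nat.card A = n
  cardB : Nat.card B = n
  cardM : Nat.card M = n

namespace Core

variable {A B M AM BM : Subgroup G} {n : ℕ} (hc : Core A B M AM BM n)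

include hc

lemma eAM : ∀ x ∈ A, x ∈ M → x = 1 := fun x hx hm => hc.eABM x hx (hc.mBM x hm)

lemma eBM : ∀ x ∈ B, x ∈ M → x = 1 := fun x hx hm => hc.eBAM x hx (hc.mAM x hm)

/-- conjugation-stability of `A`-intersections: `c b c⁻¹ ∈ A → b = 1` for `c ∈ A`. -/
lemma conjB_mem_A {c b : G} (hcA : c ∈ A) (hb : b ∈ B)
    (h : c * b * c⁻¹ ∈ A) : b = 1 := by
  have hb' : b ∈ A := by
    have : c⁻¹ * (c * b * c⁻¹) * c ∈ A :=
      mul_mem (mul_mem (inv_mem hcA) h) hcA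
    simpa [mul_assoc] using this
  exact hc.eAB b hb' hb

/-- if `x⁻¹ m x ∈ M` then `m ∈ M` (normality both ways). -/
lemma mem_M_of_conj {x m : G} (h : x⁻¹ * m * x ∈ M) : m ∈ M := by
  have := hc.normM x _ h
  simpa [mul_assoc] using this

end Core

section Lines

variable {A B M AM BM : Subgroup G} {n : ℕ}

lemma mem_LS_self (d : Option A) (y : G) : y ∈ LS A B M d y := by
  cases d with
  | none => exact ⟨1, one_mem _, 1, one_mem _, by group⟩
  | some c => exact ⟨1, one_mem _, 1, one_mem _, by group⟩

lemma LS_sat {d : Option A} {y g : G} (hg : g ∈ LS A B M d y) {a : G} (ha : a ∈ A) :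
    g * a ∈ LS A B M d y := by
  cases d with
  | none =>
      obtain ⟨m, hm, a₁, ha₁, rfl⟩ := hg
      exact ⟨m, hm, a₁ * a, mul_mem ha₁ ha, by group⟩
  | some c =>
      obtain ⟨b, hb, a₁, ha₁, rfl⟩ := hg
      exact ⟨b, hb, a₁ * a, mul_mem ha₁ ha, by group⟩

lemma LS_mul_mem_iff {d : Option A} (h y g : G) :
    g ∈ LS A B M d (h * y) ↔ h⁻¹ * g ∈ LS A B M d y := by
  cases d with
  | none =>
      constructor
      · rintro ⟨m, hm, a, ha, rfl⟩; exact ⟨m, hm, a, ha, by group⟩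
      · rintro ⟨m, hm, a, ha, hE⟩
        exact ⟨m, hm, a, ha, by rw [← mul_left_cancel_iff (a := h⁻¹)]; simpa [mul_assoc] using hE⟩
  | some c =>
      constructor
      · rintro ⟨b, hb, a, ha, rfl⟩; exact ⟨b, hb, a, ha, by group⟩
      · rintro ⟨b, hb, a, ha, hE⟩
        exact ⟨b, hb, a, ha, by rw [← mul_left_cancel_iff (a := h⁻¹)]; simpa [mul_assoc] using hE⟩

lemma LS_translate {d : Option A} {y g : G} (hg : g ∈ LS A B M d y) (h : G) :
    h * g ∈ LS A B M d (h * y) := by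
  rw [LS_mul_mem_iff]; simpa [mul_assoc] using hg

lemma LS_base_congr {d : Option A} {y y' : G} (hE : LS A B M d y = LS A B M d y') (h : G) :
    LS A B M d (h * y) = LS A B M d (h * y') := by
  ext g; rw [LS_mul_mem_iff, LS_mul_mem_iff, hE]

variable (hc : Core A B M AM BM n)

include hc

lemma rebase_none {y z : G} (hz : z ∈ LS A B M none y) :
    LS A B M none y = LS A B M none z := by
  obtain ⟨m, hm, a, ha, rfl⟩ := hz
  ext g
  constructor
  · rintro ⟨m₁, hm₁, a₁, ha₁, rfl⟩
    refine ⟨a⁻¹ * (m⁻¹ * m₁) * a⁻¹⁻¹, hc.normM a⁻¹ _ (mul_mem (inv_mem hm) hm₁),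
      a⁻¹ * a₁, mul_mem (inv_mem ha) ha₁, by group⟩
  · rintro ⟨m₂, hm₂, a₂, ha₂, rfl⟩
    refine ⟨m * (a * m₂ * a⁻¹), mul_mem hm (hc.normM a _ hm₂),
      a * a₂, mul_mem ha ha₂, by group⟩

lemma rebase_some {c : A} {y z : G} (hz : z ∈ LS A B M (some c) y) :
    ∃ c' : A, LS A B M (some c) y = LS A B M (some c') z := by
  obtain ⟨b, hb, a, ha, rfl⟩ := hz
  refine ⟨⟨a⁻¹ * c, mul_mem (inv_mem ha) c.2⟩, ?_⟩
  ext g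
  constructor
  · rintro ⟨b₁, hb₁, a₁, ha₁, rfl⟩
    refine ⟨b⁻¹ * b₁, mul_mem (inv_mem hb) hb₁, a⁻¹ * a₁, mul_mem (inv_mem ha) ha₁, ?_⟩
    show _ = _ * (a⁻¹ * (c:G) * _ * (a⁻¹ * (c:G))⁻¹ * _)
    group
  · rintro ⟨b₂, hb₂, a₂, ha₂, hE⟩
    refine ⟨b * b₂, mul_mem hb hb₂, a * a₂, mul_mem ha ha₂, ?_⟩
    rw [hE]
    show _ * (a⁻¹ * (c:G) * _ * (a⁻¹ * (c:G))⁻¹ * _) = _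
    group

lemma memV_memQ {c : A} {z w : G} (hw₁ : w ∈ LS A B M none z)
    (hw₂ : w ∈ LS A B M (some c) z) : SP A z w := by
  obtain ⟨m, hm, a, ha, hE⟩ := hw₁
  obtain ⟨b, hb, a', ha', hE'⟩ := hw₂
  have hXY : m * a = (c : G) * b * (c : G)⁻¹ * a' := mul_left_cancel (hE.symm.trans hE')
  have hcb : (c : G) * b * (c : G)⁻¹ = m * (a * a'⁻¹) := by
    have h2 : m * (a * a'⁻¹) = m * a * a'⁻¹ := by group
    rw [h2, hXY]; group
  have hmm : (c : G)⁻¹ * m * c ∈ M := by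
    have := hc.normM (c : G)⁻¹ m hm; simpa [inv_inv] using this
  have haa : (c : G)⁻¹ * (a * a'⁻¹) * c ∈ A :=
    mul_mem (mul_mem (inv_mem c.2) (mul_mem ha (inv_mem ha'))) c.2
  have hbeq : b = ((c : G)⁻¹ * m * c) * ((c : G)⁻¹ * (a * a'⁻¹) * c) := by
    have h2 : b = (c : G)⁻¹ * ((c:G) * b * (c:G)⁻¹) * c := by group
    rw [h2, hcb]; group
  have hb1 : b = 1 := by
    have hA' : (c : G)⁻¹ * (a * a'⁻¹) * c ∈ BM := by
      have h2 : ((c : G)⁻¹ * (a * a'⁻¹) * c) = b * (b⁻¹ * (((c:G)⁻¹ * m * c))⁻¹ * b) := by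
        rw [hbeq]; group
      rw [h2]
      refine mul_mem (hc.bBM b hb) (hc.mBM _ ?_)
      have := hc.normM b⁻¹ _ (inv_mem hmm)
      simpa [mul_assoc] using this
    have hA1 := hc.eABM _ haa hA'
    rw [hA1, mul_one] at hbeq
    exact hc.eBM b hb (by rw [hbeq]; exact hmm)
  exact ⟨a', ha', by rw [hE', hb1]; group⟩

lemma QQ {c₁ c₂ : A} {z w : G} (hw₁ : w ∈ LS A B M (some c₁) z)
    (hw₂ : w ∈ LS A B M (some c₂) z) (h : ¬ SP A z w) : c₁ = c₂ := by
  obtain ⟨b₁, hb₁, a₁, ha₁, hE₁⟩ := hw₁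
  obtain ⟨b₂, hb₂, a₂, ha₂, hE₂⟩ := hw₂
  have hb₁1 : b₁ ≠ 1 := by
    rintro rfl
    exact h ⟨a₁, ha₁, by rw [hE₁]; group⟩
  have hE : (c₁ : G) * b₁ * (c₁ : G)⁻¹ * a₁ = (c₂ : G) * b₂ * (c₂ : G)⁻¹ * a₂ :=
    mul_left_cancel (hE₁.symm.trans hE₂)
  have key : ((c₂ : G)⁻¹ * c₁) * b₁ * ((c₁ : G)⁻¹ * (a₁ * a₂⁻¹) * c₂) = b₂ := by
    have h2 : (c₂:G)⁻¹ * ((c₁:G) * b₁ * (c₁:G)⁻¹ * a₁) * (a₂⁻¹ * (c₂:G)) = b₂ := by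
      rw [hE]; group
    rw [← h2]; group
  have := hc.l0 _ (mul_mem (inv_mem c₂.2) c₁.2) _ hb₁
      _ (mul_mem (mul_mem (inv_mem c₁.2) (mul_mem ha₁ (inv_mem ha₂))) c₂.2) _ hb₂ key
  rcases this with ⟨h1, _, _⟩ | ⟨h1, _, _⟩
  · exact Subtype.ext (inv_mul_eq_one.mp h1).symm
  · exact absurd h1 hb₁1

lemma formsNe {c : A} {y z : G} : LS A B M (some c) y ≠ LS A B M none z := by
  intro hE
  have hy : y ∈ LS A B M none z := by rw [← hE]; exact mem_LS_self _ _
  have hEz : LS A B M none z = LS A B M none y := rebase_none hc hy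
  obtain ⟨bh, hbh, hbh1⟩ := hc.exB
  have hw : y * ((c:G) * bh * (c:G)⁻¹ * 1) ∈ LS A B M (some c) y := ⟨bh, hbh, 1, one_mem _, rfl⟩
  have hw' : y * ((c:G) * bh * (c:G)⁻¹ * 1) ∈ LS A B M none y := by
    rw [← hEz, ← hE]; exact hw
  obtain ⟨a, ha, hEa⟩ := memV_memQ hc hw' hw
  have h3 : (c:G) * bh * (c:G)⁻¹ * 1 = a := mul_left_cancel hEa
  have h4 : (c : G) * bh * (c : G)⁻¹ ∈ A := by
    have : (c:G) * bh * (c:G)⁻¹ = a := by rw [← h3]; group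
    rw [this]; exact ha
  exact hbh1 (hc.conjB_mem_A c.2 hbh h4)

lemma uniq2 {d₁ d₂ : Option A} {y₁ y₂ z w : G}
    (hz₁ : z ∈ LS A B M d₁ y₁) (hw₁ : w ∈ LS A B M d₁ y₁)
    (hz₂ : z ∈ LS A B M d₂ y₂) (hw₂ : w ∈ LS A B M d₂ y₂)
    (hzw : ¬ SP A z w) : LS A B M d₁ y₁ = LS A B M d₂ y₂ := by
  cases d₁ with
  | none =>
      have e₁ : LS A B M none y₁ = LS A B M none z := rebase_none hc hz₁
      cases d₂ with
      | none => rw [e₁, rebase_none hc hz₂]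
      | some c₂ =>
          obtain ⟨c₂', e₂⟩ := rebase_some hc hz₂
          exact absurd (memV_memQ hc (by rw [← e₁]; exact hw₁) (by rw [← e₂]; exact hw₂)) hzw
  | some c₁ =>
      obtain ⟨c₁', e₁⟩ := rebase_some hc hz₁
      cases d₂ with
      | none =>
          have e₂ : LS A B M none y₂ = LS A B M none z := rebase_none hc hz₂
          exact absurd (memV_memQ hc (by rw [← e₂]; exact hw₂) (by rw [← e₁]; exact hw₁)) hzw
      | some c₂ =>
          obtain ⟨c₂', e₂⟩ := rebase_some hc hz₂
          have := QQ hc (by rw [← e₁]; exact hw₁) (by rw [← e₂]; exact hw₂) hzw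
          rw [e₁, e₂, this]

lemma cover_pair (x z : G) : ∃ d : Option A, z ∈ LS A B M d x := by
  rcases hc.cover (x⁻¹ * z) with ⟨m, hm, a, ha, hE⟩ | ⟨c, hcA, b, hb, a, ha, hE⟩
  · exact ⟨none, m, hm, a, ha, by rw [← hE]; group⟩
  · exact ⟨some ⟨c, hcA⟩, b, hb, a, ha, by show z = x * (c * b * c⁻¹ * a); rw [← hE]; group⟩

lemma moveline {σ : G} (hσBM : ∀ x, x * σ * x⁻¹ ∈ BM) (hσM : σ ∉ M) (w : G) :
    ∃ c : A, σ * w ∈ LS A B M (some c) w := by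
  obtain ⟨d, hd⟩ := cover_pair hc w (σ * w)
  cases d with
  | some c => exact ⟨c, hd⟩
  | none =>
      exfalso
      obtain ⟨m, hm, a, ha, hE⟩ := hd
      have h5 : w⁻¹ * σ * w = m * a := by rw [mul_assoc, hE]; group
      have h6 : w⁻¹ * σ * w ∈ BM := by
        have := hσBM w⁻¹; simpa [inv_inv] using this
      have ha' : a = m⁻¹ * (w⁻¹ * σ * w) := by rw [h5]; group
      have haBM : a ∈ BM := by
        rw [ha']; exact mul_mem (inv_mem (hc.mBM m hm)) h6
      have ha1 : a = 1 := hc.eABM a ha haBM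
      rw [ha1, mul_one] at h5
      exact hσM (hc.mem_M_of_conj (by rw [h5]; exact hm))

lemma Tm {c : A} {y μ w : G} (hμ : μ ∈ M) (hw : w ∈ LS A B M (some c) y)
    (hw2 : μ * w ∈ LS A B M (some c) y) : μ = 1 := by
  by_cases hsp : SP A w (μ * w)
  · obtain ⟨a, ha, hE⟩ := hsp
    have ha' : w⁻¹ * μ * w = a := by rw [mul_assoc, hE]; group
    have haM : a ∈ M := by
      rw [← ha']
      have := hc.normM w⁻¹ μ hμ; simpa [inv_inv] using this
    have ha1 : a = 1 := hc.eAM a (ha' ▸ ha) haM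
    rw [ha1, mul_one] at hE
    simpa using hE
  · exfalso
    have hμw : μ * w ∈ LS A B M none w := by
      refine ⟨w⁻¹ * μ * w, ?_, 1, one_mem _, by group⟩
      have := hc.normM w⁻¹ μ hμ; simpa [inv_inv] using this
    have := uniq2 hc hw hw2 (mem_LS_self none w) hμw hsp
    exact formsNe hc this

lemma Tt {t : G} (ht2 : t * t = 1) (ht1 : t ≠ 1)
    (htBM : ∀ x, x * t * x⁻¹ ∈ BM) {d : Option A} {y w : G}
    (hw : w ∈ LS A B M d y) (hw2 : t * w ∈ LS A B M d y) :
    LS A B M d (t * y) = LS A B M d y := by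
  have hnsp : ¬ SP A w (t * w) := by
    rintro ⟨a, ha, hE⟩
    have ha' : w⁻¹ * t * w = a := by rw [mul_assoc, hE]; group
    have haBM : a ∈ BM := by
      rw [← ha']; have := htBM w⁻¹; simpa [inv_inv] using this
    have ha1 : a = 1 := hc.eABM a ha haBM
    rw [ha1, mul_one] at hE
    exact ht1 (by simpa using hE)
  have h1 : t * w ∈ LS A B M d (t * y) := LS_translate hw t
  have h2 : w ∈ LS A B M d (t * y) := by
    have := LS_translate hw2 t
    simpa [← mul_assoc, ht2] using this
  exact uniq2 hc h2 h1 hw hw2 hnsp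

end Lines

section Counting

variable {A B M AM BM : Subgroup G} {n : ℕ} [Finite G]
variable (hc : Core A B M AM BM n)

include hc

lemma PUcount {I : Type*} [Fintype I] (hcard : Fintype.card I = n)
    {d₁ d₂ dy : Option A} {p y : G} (ι : I → G)
    (hι : ∀ i, ι i ∈ LS A B M dy y)
    (hinj : ∀ i j, SP A (ι i) (ι j) → i = j)
    (h1 : ∀ g ∈ LS A B M d₁ p, g ∉ LS A B M dy y)
    (h2 : ∀ g ∈ LS A B M d₂ p, g ∉ LS A B M dy y)
    (hne : d₁ ≠ d₂) : False := by
  have hp : p ∉ LS A B M dy y := h1 p (mem_LS_self _ _)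
  have hcov : ∀ i, ∃ e : Option A, ι i ∈ LS A B M e p := fun i => cover_pair hc p (ι i)
  choose F hF using hcov
  have hFne₁ : ∀ i, F i ≠ d₁ := fun i h => h1 (ι i) (h ▸ hF i) (hι i)
  have hFne₂ : ∀ i, F i ≠ d₂ := fun i h => h2 (ι i) (h ▸ hF i) (hι i)
  have hFinj : Function.Injective F := by
    intro i j h
    by_contra hij
    have hnsp : ¬ SP A (ι i) (ι j) := fun hsp => hij (hinj i j hsp)
    have hEq := uniq2 hc (hF i) (h ▸ hF j) (hι i) (hι j) hnsp
    exact hp (hEq ▸ mem_LS_self (F i) p)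
  classical
  have : Fintype A := Fintype.ofFinite _
  set J : Option (Option I) → Option A := fun o => o.elim d₁ (fun o' => o'.elim d₂ F) with hJ
  have hJinj : Function.Injective J := by
    intro o o' h
    rcases o with _ | o <;> rcases o' with _ | o'
    · rfl
    · rcases o' with _ | j
      · exact absurd h hne
      · exact absurd h.symm (hFne₁ j)
    · rcases o with _ | i
      · exact absurd h hne.symm
      · exact absurd h (hFne₁ i)
    · rcases o with _ | i <;> rcases o' with _ | j
      · rfl
      · exact absurd h.symm (hFne₂ j)
      · exact absurd h (hFne₂ i)
      · rw [hFinj h]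
  have hcards := Fintype.card_le_of_injective J hJinj
  have hcA : Fintype.card A = n := by rw [← Nat.card_eq_fintype_card, hc.cardA]
  simp [Fintype.card_option, hcard, hcA] at hcards

lemma PU {d₁ d₂ dy : Option A} {p y : G}
    (h1 : ∀ g ∈ LS A B M d₁ p, g ∉ LS A B M dy y)
    (h2 : ∀ g ∈ LS A B M d₂ p, g ∉ LS A B M dy y)
    (hLne : LS A B M d₁ p ≠ LS A B M d₂ p) : False := by
  classical
  have hne : d₁ ≠ d₂ := fun h => hLne (by rw [h])
  cases dy with
  | none =>
      have : Fintype M := Fintype.ofFinite _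
      refine PUcount hc (I := M) ?_ (fun i => y * ((i : G) * 1)) ?_ ?_ h1 h2 hne
      · rw [← Nat.card_eq_fintype_card, hc.cardM]
      · exact fun i => ⟨(i : G), i.2, 1, one_mem _, rfl⟩
      · rintro i j ⟨a, ha, hE⟩
        have hE' : y * ((j:G) * 1) = y * ((i:G) * 1) * a := hE
        have h5 : (j : G) = (i : G) * a := by
          have := mul_left_cancel (a := y) (by simpa [mul_assoc] using hE')
          simpa using this
        have ha' : (i : G)⁻¹ * (j : G) = a := by rw [h5]; group
        have h6 : (i : G)⁻¹ * (j : G) = 1 :=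
          hc.eAM _ (ha' ▸ ha) (mul_mem (inv_mem i.2) j.2)
        exact Subtype.ext (inv_mul_eq_one.mp h6)
  | some c =>
      have : Fintype B := Fintype.ofFinite _
      refine PUcount hc (I := B) ?_ (fun i => y * ((c : G) * (i : G) * (c : G)⁻¹ * 1)) ?_ ?_ h1 h2 hne
      · rw [← Nat.card_eq_fintype_card, hc.cardB]
      · exact fun i => ⟨(i : G), i.2, 1, one_mem _, rfl⟩
      · rintro i j ⟨a, ha, hE⟩
        have hE' : y * ((c:G) * (j:G) * (c:G)⁻¹ * 1) = y * ((c:G) * (i:G) * (c:G)⁻¹ * 1) * a := hE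
        have h5 : (c:G) * (j:G) * (c:G)⁻¹ * 1 = (c:G) * (i:G) * (c:G)⁻¹ * 1 * a :=
          mul_left_cancel (a := y) (by simpa [mul_assoc] using hE')
        have ha' : (c : G) * ((i : G)⁻¹ * (j : G)) * (c : G)⁻¹ = a := by
          have h7 : (c:G) * (j:G) * (c:G)⁻¹ = (c:G) * (i:G) * (c:G)⁻¹ * a := by
            simpa using h5
          rw [show (c:G) * ((i:G)⁻¹ * (j:G)) * (c:G)⁻¹
              = ((c:G) * (i:G) * (c:G)⁻¹)⁻¹ * ((c:G) * (j:G) * (c:G)⁻¹) from by group, h7]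
          group
        have h6 : (i : G)⁻¹ * (j : G) = 1 :=
          hc.conjB_mem_A c.2 (mul_mem (inv_mem i.2) j.2) (ha' ▸ ha)
        exact Subtype.ext (inv_mul_eq_one.mp h6)

end Counting

section Elation

variable {A B M AM BM : Subgroup G} {n : ℕ} [Finite G]
variable (hc : Core A B M AM BM n)

include hc

lemma nsp_t {t : G} (ht1 : t ≠ 1) (htBM : ∀ x, x * t * x⁻¹ ∈ BM) (z : G) :
    ¬ SP A z (t * z) := by
  rintro ⟨a, ha, hE⟩
  have ha' : z⁻¹ * t * z = a := by rw [mul_assoc, hE]; group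
  have haBM : a ∈ BM := by
    rw [← ha']; have := htBM z⁻¹; simpa [inv_inv] using this
  have ha1 : a = 1 := hc.eABM a ha haBM
  rw [ha1, mul_one] at hE
  exact ht1 (by simpa using hE)

lemma E1 {t m₀ : G} (htB : t ∈ B) (ht2 : t * t = 1) (ht1 : t ≠ 1)
    (htBM : ∀ x, x * t * x⁻¹ ∈ BM) (hm : m₀ ∈ M) (hm1 : m₀ ≠ 1) :
    t * m₀ = m₀ * t := by
  have htM : t ∉ M := fun h => ht1 (hc.eBM t htB h)
  obtain ⟨c₀, hc₀⟩ := moveline hc htBM htM 1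
  have htl : t ∈ LS A B M (some c₀) 1 := by simpa using hc₀
  have h1l : (1:G) ∈ LS A B M (some c₀) 1 := mem_LS_self _ _
  obtain ⟨c₁, hc₁⟩ := moveline hc htBM htM m₀
  have hml₁ : m₀ ∈ LS A B M (some c₁) m₀ := mem_LS_self _ _
  have invl : LS A B M (some c₀) (t * 1) = LS A B M (some c₀) 1 :=
    Tt hc ht2 ht1 htBM h1l (by simpa using htl)
  have invl₁ : LS A B M (some c₁) (t * m₀) = LS A B M (some c₁) m₀ :=
    Tt hc ht2 ht1 htBM hml₁ hc₁
  have hdisj : ∀ g ∈ LS A B M (some c₀) 1, g ∉ LS A B M (some c₁) m₀ := by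
    intro z hz hz₁
    have htz : t * z ∈ LS A B M (some c₀) 1 := by
      rw [← invl]
      simpa using LS_translate hz t
    have htz₁ : t * z ∈ LS A B M (some c₁) m₀ := by
      rw [← invl₁]; exact LS_translate hz₁ t
    have hEq := uniq2 hc hz htz hz₁ htz₁ (nsp_t hc ht1 htBM z)
    have hm₀l : m₀ ∈ LS A B M (some c₀) 1 := by rw [hEq]; exact hml₁
    have h1' : m₀⁻¹ * m₀ ∈ LS A B M (some c₀) 1 := by simpa using h1l
    exact hm1 (inv_eq_one.mp (Tm hc (inv_mem hm) hm₀l h1'))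
  have hdisj' : ∀ g ∈ LS A B M (some c₁) (1:G), g ∉ LS A B M (some c₁) m₀ := by
    intro z hz hz₁
    have h2 : m₀ * z ∈ LS A B M (some c₁) m₀ := by
      simpa using LS_translate hz m₀
    exact hm1 (Tm hc hm hz₁ h2)
  have hEQ : LS A B M (some c₁) (1:G) = LS A B M (some c₀) 1 := by
    by_contra hne
    exact PU hc hdisj' hdisj hne
  have hinv'' : ∀ g ∈ LS A B M (some c₁) (1:G),
      m₀⁻¹ * (t * (m₀ * g)) ∈ LS A B M (some c₁) (1:G) := by
    intro g hg
    have s1 : m₀ * g ∈ LS A B M (some c₁) m₀ := by simpa using LS_translate hg m₀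
    have s2 : t * (m₀ * g) ∈ LS A B M (some c₁) m₀ := by
      rw [← invl₁]; exact LS_translate s1 t
    have s3 := LS_translate s2 m₀⁻¹
    simpa using s3
  have htl' : t ∈ LS A B M (some c₁) (1:G) := by rw [hEQ]; exact htl
  have hc' : m₀⁻¹ * (t * (m₀ * t)) ∈ LS A B M (some c₁) (1:G) := hinv'' t htl'
  have htinv : t⁻¹ = t := inv_eq_of_mul_eq_one_right ht2
  have hc'M : m₀⁻¹ * (t * (m₀ * t)) ∈ M := by
    have h7 : m₀⁻¹ * (t * (m₀ * t)) = m₀⁻¹ * (t * m₀ * t⁻¹) := by rw [htinv]; group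
    rw [h7]; exact mul_mem (inv_mem hm) (hc.normM t m₀ hm)
  have hc'V : m₀⁻¹ * (t * (m₀ * t)) ∈ LS A B M none (1:G) :=
    ⟨m₀⁻¹ * (t * (m₀ * t)), hc'M, 1, one_mem _, by group⟩
  have hSP : SP A (1:G) (m₀⁻¹ * (t * (m₀ * t))) := by
    by_contra hnsp
    exact formsNe hc (uniq2 hc (mem_LS_self _ _) hc' (mem_LS_self none (1:G)) hc'V hnsp)
  obtain ⟨a, ha, hE⟩ := hSP
  have hc'A : m₀⁻¹ * (t * (m₀ * t)) ∈ A := by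
    rw [show m₀⁻¹ * (t * (m₀ * t)) = a by simpa using hE]; exact ha
  have hc'1 : m₀⁻¹ * (t * (m₀ * t)) = 1 := hc.eAM _ hc'A hc'M
  have h9 : t * (m₀ * t) = m₀ := (inv_mul_eq_one.mp hc'1).symm
  calc t * m₀ = (t * (m₀ * t)) * t := by
        rw [show (t * (m₀ * t)) * t = t * (m₀ * (t * t)) from by group, ht2, mul_one]
    _ = m₀ * t := by rw [h9]

lemma E2 {t m₀ : G} (htB : t ∈ B) (ht2 : t * t = 1) (ht1 : t ≠ 1)
    (htBM : ∀ x, x * t * x⁻¹ ∈ BM) (hm : m₀ ∈ M) (hm1 : m₀ ≠ 1)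
    (hodd : Odd (orderOf m₀)) : False := by
  have hcomm : t * m₀ = m₀ * t := E1 hc htB ht2 ht1 htBM hm hm1
  have htinv : t⁻¹ = t := inv_eq_of_mul_eq_one_right ht2
  set u := m₀ * t with hu
  have huBM : ∀ x, x * u * x⁻¹ ∈ BM := by
    intro x
    have h1 : x * u * x⁻¹ = (x * m₀ * x⁻¹) * (x * t * x⁻¹) := by rw [hu]; group
    rw [h1]; exact mul_mem (hc.mBM _ (hc.normM x m₀ hm)) (htBM x)
  have huM : u ∉ M := by
    intro h
    have h2 : t ∈ M := by
      have h3 : t = m₀⁻¹ * u := by rw [hu]; group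
      rw [h3]; exact mul_mem (inv_mem hm) h
    exact ht1 (hc.eBM t htB h2)
  obtain ⟨c₁, hul'⟩ := moveline hc huBM huM 1
  have hul : u ∈ LS A B M (some c₁) (1:G) := by simpa using hul'
  have h1l : (1:G) ∈ LS A B M (some c₁) (1:G) := mem_LS_self _ _
  by_cases hcase : ∃ g ∈ LS A B M (some c₁) (1:G), t * g ∈ LS A B M (some c₁) (1:G)
  · obtain ⟨g, hg, htg⟩ := hcase
    have hinv : LS A B M (some c₁) (t * 1) = LS A B M (some c₁) (1:G) :=
      Tt hc ht2 ht1 htBM hg htg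
    have htl : t ∈ LS A B M (some c₁) (1:G) := by
      rw [← hinv]
      simpa using mem_LS_self (A := A) (B := B) (M := M) (some c₁) (t * 1)
    exact hm1 (Tm hc hm htl (hu ▸ hul))
  · push_neg at hcase
    have hdisjl : ∀ g ∈ LS A B M (some c₁) (1:G), g ∉ LS A B M (some c₁) (t * 1) := by
      intro g hg hgt
      have h5 : t * g ∈ LS A B M (some c₁) (1:G) := by
        have := (LS_mul_mem_iff t 1 g).mp hgt
        rwa [htinv] at this
      have h6 : t * (t * g) ∈ LS A B M (some c₁) (1:G) := by
        simpa [← mul_assoc, ht2] using hg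
      exact hcase (t * g) h5 h6
    have hdisju : ∀ g ∈ LS A B M (some c₁) u, g ∉ LS A B M (some c₁) (t * 1) := by
      intro g hg hgt
      have hg' : g ∈ LS A B M (some c₁) (u * 1) := by simpa using hg
      have h5 : u⁻¹ * g ∈ LS A B M (some c₁) (1:G) := (LS_mul_mem_iff u 1 g).mp hg'
      have h7 : t * (u⁻¹ * g) ∈ LS A B M (some c₁) (t * 1) := LS_translate h5 t
      have h8 : m₀ * (t * (u⁻¹ * g)) ∈ LS A B M (some c₁) (t * 1) := by
        have h9 : m₀ * (t * (u⁻¹ * g)) = g := by rw [hu]; group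
        rw [h9]; exact hgt
      exact hm1 (Tm hc hm h7 h8)
    obtain ⟨c₂, hreb⟩ := rebase_some hc hul
    have hEQ : LS A B M (some c₁) u = LS A B M (some c₂) u := by
      by_contra hne
      refine PU hc (dy := some c₁) (y := t * 1) hdisju ?_ hne
      intro g hg
      exact hdisjl g (by rw [hreb]; exact hg)
    have hstep : LS A B M (some c₁) u = LS A B M (some c₁) (1:G) := hEQ.trans hreb.symm
    have hpow : ∀ k : ℕ, LS A B M (some c₁) (u ^ k) = LS A B M (some c₁) (1:G) := by
      intro k
      induction k with
      | zero => rw [pow_zero]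
      | succ k ih =>
          have h5 := LS_base_congr hstep (u ^ k)
          rw [pow_succ, h5, mul_one, ih]
    have hq : u ^ orderOf m₀ = t := by
      have hC : Commute m₀ t := hcomm.symm
      rw [hu, hC.mul_pow, pow_orderOf_eq_one, one_mul]
      obtain ⟨k, hk⟩ := hodd
      rw [hk, pow_succ, pow_mul, show t ^ 2 = 1 from by rw [pow_two]; exact ht2,
        one_pow, one_mul]
    have hfin : LS A B M (some c₁) t = LS A B M (some c₁) (1:G) := by
      rw [← hq]; exact hpow _
    have htl2 : t ∈ LS A B M (some c₁) (1:G) := by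
      rw [← hfin]; exact mem_LS_self _ _
    exact hcase 1 h1l (by simpa using htl2)

end Elation

section Build

variable {A B M AM BM : Subgroup G} {n : ℕ} [Finite G]

lemma mkCore (hn : 1 < n) (hAB : A ⊓ B = ⊥)
    (hA : Nat.card A = n) (hB : Nat.card B = n) (hM : Nat.card M = n)
    (hG : Nat.card G = n ^ 3)
    (hAMs : (AM : Set G) = (A : Set G) * (M : Set G))
    (hBMs : (BM : Set G) = (B : Set G) * (M : Set G))
    (hAMcard : Nat.card AM = n ^ 2) (hBMcard : Nat.card BM = n ^ 2)
    (h3 : ∀ g : G, ∃ a ∈ A, ∃ m ∈ M, ∃ b ∈ B, g = a * m * b)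
    (h4 : ((A : Set G) * (B : Set G)) ∩ ((B : Set G) * (A : Set G)) =
      (A : Set G) ∪ (B : Set G))
    (hnorm : M.Normal) : Core A B M AM BM n := by
  classical
  have hFG : Fintype G := Fintype.ofFinite G
  have hFA : Fintype A := Fintype.ofFinite _
  have hFB : Fintype B := Fintype.ofFinite _
  have hFM : Fintype M := Fintype.ofFinite _
  have hFAM : Fintype AM := Fintype.ofFinite _
  have hFBM : Fintype BM := Fintype.ofFinite _
  have cA : Fintype.card A = n := by rw [← Nat.card_eq_fintype_card, hA]
  have cB : Fintype.card B = n := by rw [← Nat.card_eq_fintype_card, hB]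
  have cM : Fintype.card M = n := by rw [← Nat.card_eq_fintype_card, hM]
  have cG : Fintype.card G = n ^ 3 := by rw [← Nat.card_eq_fintype_card, hG]
  have cAM : Fintype.card AM = n ^ 2 := by rw [← Nat.card_eq_fintype_card, hAMcard]
  have cBM : Fintype.card BM = n ^ 2 := by rw [← Nat.card_eq_fintype_card, hBMcard]
  have normM : ∀ (g x : G), x ∈ M → g * x * g⁻¹ ∈ M := fun g x hx => hnorm.conj_mem x hx g
  have eAB : ∀ x ∈ A, x ∈ B → x = 1 := by
    intro x hx hy
    have : x ∈ A ⊓ B := Subgroup.mem_inf.mpr ⟨hx, hy⟩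
    rw [hAB] at this
    exact Subgroup.mem_bot.mp this
  have mBM : ∀ x ∈ M, x ∈ BM := by
    intro x hx
    rw [← SetLike.mem_coe, hBMs]
    exact one_mul x ▸ Set.mul_mem_mul (one_mem B) hx
  have bBM : ∀ x ∈ B, x ∈ BM := by
    intro x hx
    rw [← SetLike.mem_coe, hBMs]
    exact mul_one x ▸ Set.mul_mem_mul hx (one_mem M)
  have mAM : ∀ x ∈ M, x ∈ AM := by
    intro x hx
    rw [← SetLike.mem_coe, hAMs]
    exact one_mul x ▸ Set.mul_mem_mul (one_mem A) hx
  have aAM : ∀ x ∈ A, x ∈ AM := by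
    intro x hx
    rw [← SetLike.mem_coe, hAMs]
    exact mul_one x ▸ Set.mul_mem_mul hx (one_mem M)
  have eABM : ∀ x ∈ A, x ∈ BM → x = 1 := by
    intro x hxA hxBM
    set f : A × BM → G := fun p => (p.1 : G) * (p.2 : G) with hf
    have hsurj : Function.Surjective f := by
      intro g
      obtain ⟨a, ha, m, hm, b, hb, hg⟩ := h3 g
      refine ⟨(⟨a, ha⟩, ⟨m * b, mul_mem (mBM m hm) (bBM b hb)⟩), ?_⟩
      rw [hf]; show a * (m * b) = g; rw [hg]; group
    have hbij : Function.Bijective f := by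
      refine (Fintype.bijective_iff_surjective_and_card f).mpr ⟨hsurj, ?_⟩
      rw [Fintype.card_prod, cA, cBM, cG]; ring
    have h1 : f (⟨x, hxA⟩, 1) = f (1, ⟨x, hxBM⟩) := by
      rw [hf]; show x * ((1 : BM) : G) = ((1 : A) : G) * x; simp
    have h2 := hbij.injective h1
    exact Subtype.ext_iff.mp (Prod.ext_iff.mp h2).1
  have eBAM : ∀ x ∈ B, x ∈ AM → x = 1 := by
    intro x hxB hxAM
    set f : B × AM → G := fun p => (p.1 : G) * (p.2 : G) with hf
    have hsurj : Function.Surjective f := by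
      intro g
      obtain ⟨a, ha, m, hm, b, hb, hg⟩ := h3 g⁻¹
      refine ⟨(⟨b⁻¹, inv_mem hb⟩,
        ⟨m⁻¹ * a⁻¹, mul_mem (inv_mem (mAM m hm)) (inv_mem (aAM a ha))⟩), ?_⟩
      rw [hf]; show b⁻¹ * (m⁻¹ * a⁻¹) = g
      have h5 : g = (a * m * b)⁻¹ := by rw [← hg]; group
      rw [h5]; group
    have hbij : Function.Bijective f := by
      refine (Fintype.bijective_iff_surjective_and_card f).mpr ⟨hsurj, ?_⟩
      rw [Fintype.card_prod, cB, cAM, cG]; ring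
    have h1 : f (⟨x, hxB⟩, 1) = f (1, ⟨x, hxAM⟩) := by
      rw [hf]; show x * ((1 : AM) : G) = ((1 : B) : G) * x; simp
    have h2 := hbij.injective h1
    exact Subtype.ext_iff.mp (Prod.ext_iff.mp h2).1
  have eAM' : ∀ x ∈ A, x ∈ M → x = 1 := fun x hx hm => eABM x hx (mBM x hm)
  have eBM' : ∀ x ∈ B, x ∈ M → x = 1 := fun x hx hm => eBAM x hx (mAM x hm)
  have l0 : ∀ α ∈ A, ∀ b ∈ B, ∀ β ∈ A, ∀ b' ∈ B, α * b * β = b' →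
      (α = 1 ∧ β = 1 ∧ b = b') ∨ (b = 1 ∧ b' = 1 ∧ α * β = 1) := by
    intro α hα b hb β hβ b' hb' hE
    have hx : α * b ∈ (A : Set G) * (B : Set G) := Set.mul_mem_mul hα hb
    have hx2 : α * b ∈ (B : Set G) * (A : Set G) := by
      have h5 : α * b = b' * β⁻¹ := by rw [← hE]; group
      rw [h5]; exact Set.mul_mem_mul hb' (inv_mem hβ)
    have hmem : α * b ∈ (A : Set G) ∪ (B : Set G) := by
      rw [← h4]; exact ⟨hx, hx2⟩
    rcases hmem with hmem | hmem
    · have hbA : b ∈ A := by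
        have h5 : b = α⁻¹ * (α * b) := by group
        rw [h5]; exact mul_mem (inv_mem hα) hmem
      have hb1 : b = 1 := eAB b hbA hb
      have hE2 : α * β = b' := by rw [← hE, hb1]; group
      have hab : α * β ∈ A := mul_mem hα hβ
      have hb'1 : b' = 1 := eAB b' (hE2 ▸ hab) hb'
      exact Or.inr ⟨hb1, hb'1, hE2.trans hb'1⟩
    · have hαB : α ∈ B := by
        have h5 : α = (α * b) * b⁻¹ := by group
        rw [h5]; exact mul_mem hmem (inv_mem hb)
      have hα1 : α = 1 := eAB α hα hαB
      have hβE : β = b⁻¹ * b' := by rw [← hE, hα1]; group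
      have hβB : β ∈ B := hβE ▸ mul_mem (inv_mem hb) hb'
      have hβ1 : β = 1 := eAB β hβ hβB
      have hbb' : b = b' := by rw [← hE, hα1, hβ1]; group
      exact Or.inl ⟨hα1, hβ1, hbb'⟩
  have cover : ∀ g : G, (∃ m ∈ M, ∃ a ∈ A, g = m * a) ∨
      (∃ c ∈ A, ∃ b ∈ B, ∃ a ∈ A, g = c * b * c⁻¹ * a) := by
    have hFsub : Fintype {b : B // b ≠ 1} := Fintype.ofFinite _
    intro g
    set f : (M × A) ⊕ ({b : B // b ≠ 1} × A × A) → G := fun p =>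
      Sum.elim (fun q : M × A => (q.1 : G) * q.2)
        (fun q : {b : B // b ≠ 1} × A × A =>
          (q.2.1 : G) * (q.1 : B) * (q.2.1 : G)⁻¹ * q.2.2) p
      with hf
    have hinj : Function.Injective f := by
      rintro (⟨m, a⟩ | ⟨⟨b, hb⟩, c, a⟩) (⟨m', a'⟩ | ⟨⟨b', hb'⟩, c', a'⟩) hE <;>
        simp only [hf, Sum.elim_inl, Sum.elim_inr] at hE
      · -- inl inl
        have h5 : (m' : G)⁻¹ * (m : G) = (a' : G) * (a : G)⁻¹ := by
          rw [show (m':G)⁻¹ * (m:G) = (m':G)⁻¹ * ((m:G) * (a:G)) * (a:G)⁻¹ from by group, hE]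
          group
        have hMm : (m' : G)⁻¹ * (m : G) ∈ M := mul_mem (inv_mem m'.2) m.2
        have hAm : (m' : G)⁻¹ * (m : G) ∈ A := h5 ▸ mul_mem a'.2 (inv_mem a.2)
        have h6 : (m' : G)⁻¹ * (m : G) = 1 := eAM' _ hAm hMm
        have hmm : (m : G) = m' := (inv_mul_eq_one.mp h6).symm
        have haa : (a : G) = a' := by
          have h7 := hE
          rw [hmm] at h7
          exact mul_left_cancel h7
        have e1 : m = m' := Subtype.ext hmm
        have e2 : a = a' := Subtype.ext haa
        rw [e1, e2]
      · -- inl inr : impossible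
        exfalso
        have hbv : (b' : G) = ((c' : G)⁻¹ * m * c') * ((c' : G)⁻¹ * ((a : G) * (a' : G)⁻¹) * c') := by
          rw [show ((c':G)⁻¹ * (m:G) * c') * ((c':G)⁻¹ * ((a:G) * (a':G)⁻¹) * c')
              = (c':G)⁻¹ * (((m:G) * (a:G)) * (a':G)⁻¹) * c' from by group, hE]
          group
        have hmm : (c' : G)⁻¹ * m * c' ∈ M := by
          have := normM (c' : G)⁻¹ m m.2; simpa [inv_inv] using this
        have haa : (c' : G)⁻¹ * ((a : G) * (a' : G)⁻¹) * c' ∈ A :=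
          mul_mem (mul_mem (inv_mem c'.2) (mul_mem a.2 (inv_mem a'.2))) c'.2
        have hA' : (c' : G)⁻¹ * ((a : G) * (a' : G)⁻¹) * c' ∈ BM := by
          have h7 : (c' : G)⁻¹ * ((a : G) * (a' : G)⁻¹) * c'
              = (b' : G) * ((b' : G)⁻¹ * ((c' : G)⁻¹ * m * c')⁻¹ * b') := by
            rw [hbv]; group
          rw [h7]
          refine mul_mem (bBM _ b'.2) (mBM _ ?_)
          have := normM (b' : G)⁻¹ _ (inv_mem hmm); simpa [inv_inv] using this
        have h8 := eABM _ haa hA'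
        rw [h8, mul_one] at hbv
        have h9 : (b' : G) = 1 := eBM' _ b'.2 (hbv ▸ hmm)
        exact hb' (Subtype.ext (by simpa using h9))
      · -- inr inl : impossible
        exfalso
        have hbv : (b : G) = ((c : G)⁻¹ * m' * c) * ((c : G)⁻¹ * ((a' : G) * (a : G)⁻¹) * c) := by
          rw [show ((c:G)⁻¹ * (m':G) * c) * ((c:G)⁻¹ * ((a':G) * (a:G)⁻¹) * c)
              = (c:G)⁻¹ * (((m':G) * (a':G)) * (a:G)⁻¹) * c from by group, ← hE]
          group
        have hmm : (c : G)⁻¹ * m' * c ∈ M := by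
          have := normM (c : G)⁻¹ m' m'.2; simpa [inv_inv] using this
        have haa : (c : G)⁻¹ * ((a' : G) * (a : G)⁻¹) * c ∈ A :=
          mul_mem (mul_mem (inv_mem c.2) (mul_mem a'.2 (inv_mem a.2))) c.2
        have hA' : (c : G)⁻¹ * ((a' : G) * (a : G)⁻¹) * c ∈ BM := by
          have h7 : (c : G)⁻¹ * ((a' : G) * (a : G)⁻¹) * c
              = (b : G) * ((b : G)⁻¹ * ((c : G)⁻¹ * m' * c)⁻¹ * b) := by
            rw [hbv]; group
          rw [h7]
          refine mul_mem (bBM _ b.2) (mBM _ ?_)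
          have := normM (b : G)⁻¹ _ (inv_mem hmm); simpa [inv_inv] using this
        have h8 := eABM _ haa hA'
        rw [h8, mul_one] at hbv
        have h9 : (b : G) = 1 := eBM' _ b.2 (hbv ▸ hmm)
        exact hb (Subtype.ext (by simpa using h9))
      · -- inr inr
        have hb1 : (b : G) ≠ 1 := fun h => hb (Subtype.ext (by simpa using h))
        have key : ((c' : G)⁻¹ * c) * b * ((c : G)⁻¹ * ((a : G) * (a' : G)⁻¹) * c') = b' := by
          rw [show ((c':G)⁻¹ * (c:G)) * (b:G) * ((c:G)⁻¹ * ((a:G) * (a':G)⁻¹) * c')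
              = (c':G)⁻¹ * (((c:G) * (b:G) * (c:G)⁻¹ * (a:G)) * (a':G)⁻¹) * c' from by group, hE]
          group
        have := l0 _ (mul_mem (inv_mem c'.2) c.2) _ b.2
          _ (mul_mem (mul_mem (inv_mem c.2) (mul_mem a.2 (inv_mem a'.2))) c'.2) _ b'.2 key
        rcases this with ⟨h1, h2, h3'⟩ | ⟨h1, _, _⟩
        · have hcc : (c : G) = c' := (inv_mul_eq_one.mp h1).symm
          have h6 := h2
          rw [← hcc] at h6
          have haa : (a : G) * (a' : G)⁻¹ = 1 := by
            rw [show (a:G) * (a':G)⁻¹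
                = (c:G) * ((c:G)⁻¹ * ((a:G) * (a':G)⁻¹) * c) * (c:G)⁻¹ from by group, h6]
            group
          have haa' : (a : G) = a' := by rwa [mul_inv_eq_one] at haa
          have e1 : (⟨b, hb⟩ : {b : B // b ≠ 1}) = ⟨b', hb'⟩ :=
            Subtype.ext (Subtype.ext h3')
          have e2 : c = c' := Subtype.ext hcc
          have e3 : a = a' := Subtype.ext haa'
          rw [e1, e2, e3]
        · exact absurd h1 hb1
    have kcard : Fintype.card {b : B // b ≠ 1} + 1 = n := by
      have h0 := Fintype.card_subtype_compl (fun b : B => b = 1)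
      rw [Fintype.card_subtype_eq, cB] at h0
      have h5 : Fintype.card {b : B // b ≠ 1} = Fintype.card {b : B // ¬ b = 1} :=
        Fintype.card_congr (Equiv.refl _)
      rw [h5, h0]
      omega
    have hcards : Fintype.card ((M × A) ⊕ ({b : B // b ≠ 1} × A × A)) = Fintype.card G := by
      rw [Fintype.card_sum, Fintype.card_prod, Fintype.card_prod, Fintype.card_prod,
        cM, cA, cG]
      set k := Fintype.card {b : B // b ≠ 1} with hk
      have h1 : 1 + k = n := by omega
      calc n * n + k * (n * n) = (1 + k) * (n * n) := by ring
        _ = n * (n * n) := by rw [h1]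
        _ = n ^ 3 := by ring
    have hbij : Function.Bijective f :=
      (Fintype.bijective_iff_injective_and_card f).mpr ⟨hinj, hcards⟩
    obtain ⟨p, hp⟩ := hbij.surjective g
    rw [hf] at hp
    rcases p with ⟨m, a⟩ | ⟨⟨b, hb⟩, c, a⟩
    · simp only [Sum.elim_inl] at hp
      exact Or.inl ⟨m, m.2, a, a.2, hp.symm⟩
    · simp only [Sum.elim_inr] at hp
      exact Or.inr ⟨c, c.2, b, b.2, a, a.2, hp.symm⟩
  have exB : ∃ b ∈ B, b ≠ (1 : G) := by
    have hnt : Nontrivial B := by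
      have h1 : 1 < Nat.card B := by rw [hB]; exact hn
      exact Finite.one_lt_card_iff_nontrivial.mp h1
    obtain ⟨b, hb⟩ := exists_ne (1 : B)
    exact ⟨(b : G), b.2, fun h => hb (Subtype.ext (by simpa using h))⟩
  exact { normM := normM, eAB := eAB, eABM := eABM, eBAM := eBAM,
          mBM := mBM, bBM := bBM, mAM := mAM, l0 := l0, cover := cover, exB := exB,
          cardn := hn, cardA := hA, cardB := hB, cardM := hM }

end Build

end S19
/-- Suppose conditions (1)–(4) hold with `M ⊴ G` (so `A ∩ B = 1`, `|M| = n`,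
`|G| = n³`), `n` is even, and every involution of `B` is an elation of the associated
plane all of whose fixed points lie on the line at infinity (group-theoretically: it
stabilizes every point-coset `BMx` of the line at infinity and fixes no point-coset
`Ax` off that line).  Then `|G| = n³` is a power of 2. -/
theorem stmt19 {G : Type*} [Group G] [Finite G]
    (A B M AM BM : Subgroup G) (n : ℕ) (hn : 1 < n)
    (hAB : A ⊓ B = ⊥)
    (hA : Nat.card A = n) (hB : Nat.card B = n) (hM : Nat.card M = n)
    (hG : Nat.card G = n ^ 3)
    (hAM : (AM : Set G) = (A : Set G) * (M : Set G))
    (hBM : (BM : Set G) = (B : Set G) * (M : Set G))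
    (hAMcard : Nat.card AM = n ^ 2) (hBMcard : Nat.card BM = n ^ 2)
    (h3 : ∀ g : G, ∃ a ∈ A, ∃ m ∈ M, ∃ b ∈ B, g = a * m * b)
    (h4 : ((A : Set G) * (B : Set G)) ∩ ((B : Set G) * (A : Set G)) =
      (A : Set G) ∪ (B : Set G))
    (hnorm : M.Normal) (heven : 2 ∣ n)
    (helation : ∀ b ∈ B, b * b = 1 → b ≠ 1 →
      (∀ x : G, x * b * x⁻¹ ∈ BM) ∧ (∀ x : G, x * b * x⁻¹ ∉ A)) :
    Nat.card G = n ^ 3 ∧ ∃ j : ℕ, Nat.card G = 2 ^ j := by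
  classical
  refine ⟨hG, ?_⟩
  have hc : S19.Core A B M AM BM n :=
    S19.mkCore hn hAB hA hB hM hG hAM hBM hAMcard hBMcard h3 h4 hnorm
  haveI : Fact (Nat.Prime 2) := ⟨Nat.prime_two⟩
  have hdvd : 2 ∣ Nat.card B := by rw [hB]; exact heven
  obtain ⟨τ, hτ⟩ := exists_prime_orderOf_dvd_card' (G := B) 2 hdvd
  have ht2 : (τ : G) * (τ : G) = 1 := by
    have h5 : τ ^ 2 = 1 := by rw [← hτ]; exact pow_orderOf_eq_one τ
    have h6 : ((τ ^ 2 : B) : G) = 1 := by rw [h5]; simp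
    rw [← pow_two]
    simpa using h6
  have ht1 : (τ : G) ≠ 1 := by
    intro h
    have h5 : τ = 1 := Subtype.ext (by simpa using h)
    rw [h5] at hτ
    simp at hτ
  have htBM : ∀ x : G, x * (τ : G) * x⁻¹ ∈ BM := (helation (τ : G) τ.2 ht2 ht1).1
  have hM2 : IsPGroup 2 M := by
    intro μ
    have hord : orderOf (μ : G) ≠ 0 := (orderOf_pos (μ : G)).ne'
    set k := (orderOf (μ : G)).factorization 2 with hk
    set r := ordCompl[2] (orderOf (μ : G)) with hr
    have hdecomp : 2 ^ k * r = orderOf (μ : G) :=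
      Nat.ordProj_mul_ordCompl_eq_self (orderOf (μ : G)) 2
    have hr2 : ¬ 2 ∣ r := Nat.not_dvd_ordCompl Nat.prime_two hord
    have hrodd : Odd r := by
      rcases Nat.even_or_odd r with he | ho
      · exact absurd he.two_dvd hr2
      · exact ho
    have hxr : orderOf ((μ : G) ^ 2 ^ k) = r := by
      rw [orderOf_pow (μ : G)]
      have hgcd : Nat.gcd (orderOf (μ : G)) (2 ^ k) = 2 ^ k :=
        Nat.gcd_eq_right (by rw [← hdecomp]; exact dvd_mul_right _ _)
      rw [hgcd, ← hdecomp]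
      exact Nat.mul_div_cancel_left r (Nat.pow_pos (n := k) (by norm_num))
    have hx2k : (μ : G) ^ 2 ^ k = 1 := by
      by_contra hne
      refine S19.E2 hc τ.2 ht2 ht1 htBM (pow_mem μ.2 _) hne ?_
      rw [hxr]; exact hrodd
    refine ⟨k, ?_⟩
    have h7 : ((μ ^ 2 ^ k : M) : G) = (μ : G) ^ 2 ^ k := by push_cast; rfl
    exact Subtype.ext (by rw [h7, hx2k]; simp)
  obtain ⟨j, hj⟩ := hM2.exists_card_eq
  refine ⟨3 * j, ?_⟩
  rw [hG, ← hM, hj, ← pow_mul, Nat.mul_comm j 3]
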